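/- For any matrix E ∈ ℝ_max^{p×n}, (Im E)^⊥ = ker Eᵗ and (ker E)^⊤ = Im Eᵗ; that is, {(x,y) ∈ (ℝ_max^p)² : xᵗz = yᵗz for all z ∈ Im E} = {(x,y) : Eᵗx = Eᵗy}, and {z ∈ ℝ_max^n : xᵗz = yᵗz whenever Ex = Ey} = Im Eᵗ. -/

import Mathlib

/-!
Max-plus (tropical) framework.

The max-plus semiring `ℝ_max = ℝ ∪ {-∞}` is modelled as `WithBot ℝ`:
max-plus addition `a ⊕ b = max a b` is the lattice `⊔`, and max-plus
multiplication `a ⊙ b = a + b` is `+` (with `⊥ = -∞` absorbing).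
The topology induced by the metric `d(a,b) = |exp a - exp b|` is the
order topology.
-/

/-- The max-plus semiring `ℝ ∪ {-∞}`. -/
abbrev Rmax : Type := WithBot ℝ

/-- The topology of `ℝ_max` (the order topology, which coincides with the
topology induced by the metric `d(a,b) = |exp a - exp b|`). -/
instance : TopologicalSpace Rmax := Preorder.topology Rmax

instance : OrderTopology Rmax := ⟨rfl⟩

/-- Vectors with entries in a (max-plus-like) semiring `R`. -/
abbrev Vec (R : Type*) (n : ℕ) := Fin n → R

section Defs

variable {R : Type*} [LinearOrder R] [Add R] [OrderBot R]

/-- Max-plus scalar action on a vector: `(λ x)_i = λ ⊙ x_i = λ + x_i`. -/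
def sm {n : ℕ} (lam : R) (x : Vec R n) : Vec R n := fun i => lam + x i

/-- Max-plus matrix-vector product: `(A x)_i = ⊕_k A_{ik} ⊙ x_k = max_k (A_{ik} + x_k)`. -/
def mulVecMP {m n : ℕ} (A : Matrix (Fin m) (Fin n) R) (x : Vec R n) : Vec R m :=
  fun i => Finset.univ.sup fun k => A i k + x k

/-- A subsemimodule (max-plus cone) of `R^n`: a subset stable under
max-plus linear combinations `λ x ⊕ μ y`. -/
def IsSemimodule {n : ℕ} (K : Set (Vec R n)) : Prop :=
  ∀ x ∈ K, ∀ y ∈ K, ∀ lam mu : R, (sm lam x ⊔ sm mu y) ∈ K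

/-- Max-plus scalar action on a pair of vectors. -/
def smP {n : ℕ} (lam : R) (p : Vec R n × Vec R n) : Vec R n × Vec R n :=
  (sm lam p.1, sm lam p.2)

/-- A subsemimodule of `(R^n)²`. -/
def IsPairSemimodule {n : ℕ} (W : Set (Vec R n × Vec R n)) : Prop :=
  ∀ p ∈ W, ∀ q ∈ W, ∀ lam mu : R, (smP lam p ⊔ smP mu q) ∈ W

/-- A congruence on `R^n`: an equivalence relation which is a
subsemimodule of `(R^n)²`. -/
def IsCongruence {n : ℕ} (W : Set (Vec R n × Vec R n)) : Prop :=
  Equivalence (fun x y => (x, y) ∈ W) ∧ IsPairSemimodule W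

/-- The (max-plus) kernel of a matrix: `ker E = {(x,y) : E x = E y}`. -/
def kerM {p n : ℕ} (E : Matrix (Fin p) (Fin n) R) : Set (Vec R n × Vec R n) :=
  {w | mulVecMP E w.1 = mulVecMP E w.2}

/-- The image of a matrix: `Im E = {E x}`. -/
def imM {n q : ℕ} (E : Matrix (Fin n) (Fin q) R) : Set (Vec R n) :=
  {y | ∃ x : Vec R q, y = mulVecMP E x}

/-- `A W = {(A x, A y) : (x,y) ∈ W}` for a set of pairs `W`. -/
def mapCong {n : ℕ} (A : Matrix (Fin n) (Fin n) R) (W : Set (Vec R n × Vec R n)) :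
    Set (Vec R n × Vec R n) :=
  {p | ∃ w ∈ W, p = (mulVecMP A w.1, mulVecMP A w.2)}

/-- `A S = {A x : x ∈ S}`. -/
def mapSet {n : ℕ} (A : Matrix (Fin n) (Fin n) R) (S : Set (Vec R n)) : Set (Vec R n) :=
  {y | ∃ x ∈ S, y = mulVecMP A x}

/-- `A⁻¹ S = {x : A x ∈ S}`. -/
def invSet {n : ℕ} (A : Matrix (Fin n) (Fin n) R) (S : Set (Vec R n)) : Set (Vec R n) :=
  {x | mulVecMP A x ∈ S}

/-- `A⁻¹ U = {(x,y) : (A x, A y) ∈ U}` for a set of pairs `U`. -/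
def invPair {n : ℕ} (A : Matrix (Fin n) (Fin n) R) (U : Set (Vec R n × Vec R n)) :
    Set (Vec R n × Vec R n) :=
  {p | (mulVecMP A p.1, mulVecMP A p.2) ∈ U}

/-- The max-plus sum of two subsets of `R^n`: `X ⊕ Y = {x ⊕ y : x ∈ X, y ∈ Y}`. -/
def setSum {n : ℕ} (X Y : Set (Vec R n)) : Set (Vec R n) :=
  {z | ∃ x ∈ X, ∃ y ∈ Y, z = x ⊔ y}

/-- The max-plus sum of two subsets of `(R^n)²`. -/
def pairSum {n : ℕ} (X Y : Set (Vec R n × Vec R n)) : Set (Vec R n × Vec R n) :=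
  {z | ∃ x ∈ X, ∃ y ∈ Y, z = x ⊔ y}

/-- `W` is `(C,A)`-conditioned invariant: `A (W ∩ ker C) ⊆ W`. -/
def CondInv {n q : ℕ} (C : Matrix (Fin q) (Fin n) R) (A : Matrix (Fin n) (Fin n) R)
    (W : Set (Vec R n × Vec R n)) : Prop :=
  mapCong A (W ∩ kerM C) ⊆ W

/-- `X` is `(A,B)`-controlled invariant: `A X ⊆ X ⊕ Im B`. -/
def ContrInv {n q : ℕ} (A : Matrix (Fin n) (Fin n) R) (B : Matrix (Fin n) (Fin q) R)
    (X : Set (Vec R n)) : Prop :=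
  mapSet A X ⊆ setSum X (imM B)

/-- The max-plus scalar product `uᵗ v = ⊕_i u_i ⊙ v_i = max_i (u_i + v_i)`. -/
def dotMP {n : ℕ} (u v : Vec R n) : R := Finset.univ.sup fun i => u i + v i

/-- The orthogonal of a semimodule `X ⊆ R^n`:
`X^⊥ = {(x,y) : xᵗ z = yᵗ z, ∀ z ∈ X}`. -/
def orthS {n : ℕ} (X : Set (Vec R n)) : Set (Vec R n × Vec R n) :=
  {p | ∀ z ∈ X, dotMP p.1 z = dotMP p.2 z}

/-- The orthogonal of a congruence (or set of pairs) `W ⊆ (R^n)²`: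
`W^⊤ = {z : xᵗ z = yᵗ z, ∀ (x,y) ∈ W}`. -/
def orthC {n : ℕ} (W : Set (Vec R n × Vec R n)) : Set (Vec R n) :=
  {z | ∀ p ∈ W, dotMP p.1 z = dotMP p.2 z}

/-- The smallest congruence containing a set `S ⊆ (R^n)²`. -/
def spanCong {n : ℕ} (S : Set (Vec R n × Vec R n)) : Set (Vec R n × Vec R n) :=
  ⋂₀ {W | IsCongruence W ∧ S ⊆ W}

/-- The smallest semimodule containing a set `S ⊆ R^n`. -/
def spanSet {n : ℕ} (S : Set (Vec R n)) : Set (Vec R n) :=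
  ⋂₀ {K | IsSemimodule K ∧ S ⊆ K}

end Defs


section AuxProofs

open Finset

namespace MPDual

/-- Kronecker delta vector: `0` (the max-plus unit) at `k`, `⊥` elsewhere. -/
def delta {n : ℕ} (k : Fin n) : Vec Rmax n := fun k' => if k' = k then (0 : Rmax) else ⊥

lemma add_sup' (a b c : Rmax) : a + (b ⊔ c) = (a + b) ⊔ (a + c) := by
  rw [max_add_add_left]

lemma sup_add_distrib {ι : Type*} (s : Finset ι) (a : Rmax) (f : ι → Rmax) :
    a + s.sup f = s.sup fun i => a + f i := by
  induction s using Finset.cons_induction with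
  | empty => simp [WithBot.add_bot]
  | cons i s hi ih => rw [Finset.sup_cons, Finset.sup_cons, add_sup', ih]

lemma sup_add_distrib' {ι : Type*} (s : Finset ι) (a : Rmax) (f : ι → Rmax) :
    s.sup f + a = s.sup fun i => f i + a := by
  rw [add_comm, sup_add_distrib]
  exact Finset.sup_congr rfl fun i _ => add_comm _ _

lemma finset_sup_sup {ι : Type*} (s : Finset ι) (f g : ι → Rmax) :
    (s.sup fun i => f i ⊔ g i) = s.sup f ⊔ s.sup g := by
  apply le_antisymm
  · exact Finset.sup_le fun i hi => sup_le_sup (Finset.le_sup hi) (Finset.le_sup hi)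
  · exact sup_le (Finset.sup_mono_fun fun i _ => le_sup_left)
      (Finset.sup_mono_fun fun i _ => le_sup_right)

lemma dot_delta_left {n : ℕ} (k : Fin n) (v : Vec Rmax n) : dotMP (delta k) v = v k := by
  simp only [dotMP, delta]
  apply le_antisymm
  · refine Finset.sup_le fun k' _ => ?_
    by_cases h : k' = k
    · subst h; simp
    · simp [h, WithBot.bot_add]
  · calc v k = (if k = k then (0 : Rmax) else ⊥) + v k := by simp
      _ ≤ _ := Finset.le_sup (f := fun k' => (if k' = k then (0 : Rmax) else ⊥) + v k')
        (Finset.mem_univ k)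

lemma dot_delta_right {n : ℕ} (k : Fin n) (v : Vec Rmax n) : dotMP v (delta k) = v k := by
  simp only [dotMP, delta]
  apply le_antisymm
  · refine Finset.sup_le fun k' _ => ?_
    by_cases h : k' = k
    · subst h; simp
    · simp [h, WithBot.add_bot]
  · calc v k = v k + (if k = k then (0 : Rmax) else ⊥) := by simp
      _ ≤ _ := Finset.le_sup (f := fun k' => v k' + (if k' = k then (0 : Rmax) else ⊥))
        (Finset.mem_univ k)

lemma mulVec_delta {m n : ℕ} (A : Matrix (Fin m) (Fin n) Rmax) (k : Fin n) (i : Fin m) :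
    mulVecMP A (delta k) i = A i k := by
  simp only [mulVecMP, delta]
  apply le_antisymm
  · refine Finset.sup_le fun k' _ => ?_
    by_cases h : k' = k
    · subst h; simp
    · simp [h, WithBot.add_bot]
  · calc A i k = A i k + (if k = k then (0 : Rmax) else ⊥) := by simp
      _ ≤ _ := Finset.le_sup (f := fun k' => A i k' + (if k' = k then (0 : Rmax) else ⊥))
        (Finset.mem_univ k)

lemma mulVec_sup {m n : ℕ} (A : Matrix (Fin m) (Fin n) Rmax) (x y : Vec Rmax n) :
    mulVecMP A (x ⊔ y) = mulVecMP A x ⊔ mulVecMP A y := by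
  funext i
  show (Finset.univ.sup fun k => A i k + (x ⊔ y) k)
      = (Finset.univ.sup fun k => A i k + x k) ⊔ (Finset.univ.sup fun k => A i k + y k)
  rw [← finset_sup_sup]
  exact Finset.sup_congr rfl fun k _ => by rw [Pi.sup_apply, add_sup']

lemma mulVec_transpose_apply {p n : ℕ} (E : Matrix (Fin p) (Fin n) Rmax) (x : Vec Rmax p)
    (k : Fin n) : mulVecMP E.transpose x k = Finset.univ.sup fun i => E i k + x i := rfl

lemma dot_mulVec {p n : ℕ} (E : Matrix (Fin p) (Fin n) Rmax) (x : Vec Rmax p)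
    (w : Vec Rmax n) : dotMP x (mulVecMP E w) = dotMP (mulVecMP E.transpose x) w := by
  simp only [dotMP, mulVecMP, Matrix.transpose_apply]
  calc (Finset.univ.sup fun i => x i + Finset.univ.sup fun k => E i k + w k)
      = Finset.univ.sup (fun i => Finset.univ.sup fun k => x i + (E i k + w k)) :=
        Finset.sup_congr rfl fun i _ => sup_add_distrib _ _ _
    _ = Finset.univ.sup (fun k => Finset.univ.sup fun i => x i + (E i k + w k)) :=
        Finset.sup_comm _ _ _
    _ = Finset.univ.sup fun k => (Finset.univ.sup fun i => E i k + x i) + w k := by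
        refine Finset.sup_congr rfl fun k _ => ?_
        rw [sup_add_distrib']
        exact Finset.sup_congr rfl fun i _ => by rw [← add_assoc, add_comm (x i)]

lemma dot_mono_left {n : ℕ} {u u' : Vec Rmax n} (h : u ≤ u') (v : Vec Rmax n) :
    dotMP u v ≤ dotMP u' v := by
  simp only [dotMP]
  exact Finset.sup_mono_fun fun i _ => add_le_add_left (h i) _

lemma coe_add_cancel (e : ℝ) (x : Rmax) : (e : Rmax) + (x + ((-e : ℝ) : Rmax)) = x := by
  induction x using WithBot.recBotCoe with
  | bot => rw [WithBot.bot_add, WithBot.add_bot]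
  | coe a =>
    rw [← WithBot.coe_add, ← WithBot.coe_add]
    norm_num

lemma lt_sub_of_add_lt {e c : ℝ} {b : Rmax} (h : (e : Rmax) + b < (c : Rmax)) :
    b < ((c - e : ℝ) : Rmax) := by
  induction b using WithBot.recBotCoe with
  | bot => exact WithBot.bot_lt_coe _
  | coe b =>
    rw [← WithBot.coe_add, WithBot.coe_lt_coe] at h
    exact WithBot.coe_lt_coe.mpr (by linarith)

lemma key_lt {e f c : ℝ} {zk : Rmax} (h : zk + ((-f : ℝ) : Rmax) < ((c - e : ℝ) : Rmax)) :
    zk + (e : Rmax) < (c : Rmax) + (f : Rmax) := by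
  induction zk using WithBot.recBotCoe with
  | bot =>
    rw [WithBot.bot_add, ← WithBot.coe_add]
    exact WithBot.bot_lt_coe _
  | coe a =>
    rw [← WithBot.coe_add, WithBot.coe_lt_coe] at h
    rw [← WithBot.coe_add, ← WithBot.coe_add, WithBot.coe_lt_coe]
    linarith

lemma key_lt2 {e f c : ℝ} {zk : Rmax} (h : zk + (e : Rmax) < (c : Rmax) + (f : Rmax)) :
    ((e : Rmax) + ((-f : ℝ) : Rmax)) + zk < (c : Rmax) := by
  induction zk using WithBot.recBotCoe with
  | bot =>
    rw [WithBot.add_bot]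
    exact WithBot.bot_lt_coe _
  | coe a =>
    rw [← WithBot.coe_add, ← WithBot.coe_add, WithBot.coe_lt_coe] at h
    rw [← WithBot.coe_add, ← WithBot.coe_add, WithBot.coe_lt_coe]
    linarith

/-- "Residuated subtraction" valued in the top-completion of `Rmax`. -/
def subRm (z e : Rmax) : WithTop Rmax :=
  WithBot.recBotCoe ⊤ (fun r : ℝ => ((z + ((-r : ℝ) : Rmax) : Rmax) : WithTop Rmax)) e

@[simp] lemma subRm_bot (z : Rmax) : subRm z ⊥ = ⊤ := rfl

@[simp] lemma subRm_coe (z : Rmax) (r : ℝ) :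
    subRm z (r : Rmax) = ((z + ((-r : ℝ) : Rmax) : Rmax) : WithTop Rmax) := rfl

lemma main_surj {p n : ℕ} (E : Matrix (Fin p) (Fin n) Rmax) (z : Vec Rmax n)
    (hz : ∀ x y : Vec Rmax n, mulVecMP E x = mulVecMP E y → dotMP x z = dotMP y z) :
    ∃ u : Vec Rmax p, z = mulVecMP E.transpose u := by
  classical
  set u : Vec Rmax p :=
    fun i => WithTop.untopD ⊥ (Finset.univ.inf fun k' => subRm (z k') (E i k')) with hu
  have hupper : ∀ i k', E i k' + u i ≤ z k' := by
    intro i k'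
    by_cases hE : E i k' = ⊥
    · rw [hE, WithBot.bot_add]; exact bot_le
    · obtain ⟨e, he⟩ := WithBot.ne_bot_iff_exists.mp hE
      have h0 : subRm (z k') (E i k') = ((z k' + ((-e : ℝ) : Rmax) : Rmax) : WithTop Rmax) := by
        rw [← he, subRm_coe]
      have hinf : (Finset.univ.inf fun k'' => subRm (z k'') (E i k''))
          ≤ ((z k' + ((-e : ℝ) : Rmax) : Rmax) : WithTop Rmax) :=
        h0 ▸ Finset.inf_le (Finset.mem_univ k')
      have hne : (Finset.univ.inf fun k'' => subRm (z k'') (E i k'')) ≠ ⊤ :=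
        ne_top_of_le_ne_top WithTop.coe_ne_top hinf
      obtain ⟨a, ha⟩ := WithTop.ne_top_iff_exists.mp hne
      have hui : u i = a := by
        simp only [hu]
        rw [← ha, WithTop.untopD_coe]
      have hale : a ≤ z k' + ((-e : ℝ) : Rmax) := by
        rw [← ha] at hinf
        exact WithTop.coe_le_coe.mp hinf
      calc E i k' + u i = (e : Rmax) + a := by rw [← he, hui]
        _ ≤ (e : Rmax) + (z k' + ((-e : ℝ) : Rmax)) := add_le_add_right hale _
        _ = z k' := coe_add_cancel e (z k')
  refine ⟨u, funext fun k => ?_⟩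
  rw [mulVec_transpose_apply]
  refine le_antisymm ?_ (Finset.sup_le fun i _ => hupper i k)
  by_contra hcon
  push_neg at hcon
  obtain ⟨c, hc⟩ := WithBot.ne_bot_iff_exists.mp (bot_le.trans_lt hcon).ne'
  have hterm : ∀ i, E i k + u i < (c : Rmax) := by
    intro i
    have h1 := (Finset.le_sup (f := fun i => E i k + u i) (Finset.mem_univ i)).trans_lt hcon
    rwa [← hc] at h1
  have Hc : ∀ i : Fin p, E i k ≠ ⊥ → ∃ (k' : Fin n) (fv : ℝ),
      E i k' = (fv : Rmax) ∧ z k' + E i k < (c : Rmax) + (fv : Rmax) := by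
    intro i hE
    obtain ⟨e, he⟩ := WithBot.ne_bot_iff_exists.mp hE
    have h1 : u i < ((c - e : ℝ) : Rmax) := by
      apply lt_sub_of_add_lt (e := e) (c := c)
      have h := hterm i
      rwa [← he] at h
    have h0 : subRm (z k) (E i k) = ((z k + ((-e : ℝ) : Rmax) : Rmax) : WithTop Rmax) := by
      rw [← he, subRm_coe]
    have hle0 : (Finset.univ.inf fun k'' => subRm (z k'') (E i k''))
        ≤ ((z k + ((-e : ℝ) : Rmax) : Rmax) : WithTop Rmax) :=
      h0 ▸ Finset.inf_le (Finset.mem_univ k)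
    have hne : (Finset.univ.inf fun k'' => subRm (z k'') (E i k'')) ≠ ⊤ :=
      ne_top_of_le_ne_top WithTop.coe_ne_top hle0
    obtain ⟨a, ha⟩ := WithTop.ne_top_iff_exists.mp hne
    have hui : u i = a := by
      simp only [hu]
      rw [← ha, WithTop.untopD_coe]
    have h2 : (Finset.univ.inf fun k'' => subRm (z k'') (E i k''))
        < ((((c - e : ℝ) : Rmax)) : WithTop Rmax) := by
      rw [← ha]
      exact WithTop.coe_lt_coe.mpr (hui ▸ h1)
    obtain ⟨k', _, h3⟩ := Finset.inf_lt_iff.mp h2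
    have hE' : E i k' ≠ ⊥ := by
      intro hb
      rw [hb, subRm_bot] at h3
      exact not_top_lt h3
    obtain ⟨fv, hf⟩ := WithBot.ne_bot_iff_exists.mp hE'
    refine ⟨k', fv, hf.symm, ?_⟩
    rw [← hf, subRm_coe] at h3
    have h4 := WithTop.coe_lt_coe.mp h3
    rw [← he]
    exact key_lt h4
  haveI : Inhabited (Fin n) := ⟨k⟩
  choose! K fr hEf hlt2 using Hc
  set g : Fin p → Rmax := fun i => E i k + ((-(fr i) : ℝ) : Rmax) with hg
  set y : Vec Rmax n := fun k' => Finset.univ.sup fun i => if K i = k' then g i else ⊥ with hy2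
  have hEd : mulVecMP E (delta k) ≤ mulVecMP E y := by
    refine Pi.le_def.mpr fun i => ?_
    rw [mulVec_delta]
    by_cases hE : E i k = ⊥
    · rw [hE]; exact bot_le
    · have hyk : y (K i) = Finset.univ.sup fun i' => if K i' = K i then g i' else ⊥ := by
        rw [hy2]
      have h1 : g i ≤ y (K i) := by
        rw [hyk]
        have h0 := Finset.le_sup (f := fun i' => if K i' = K i then g i' else ⊥)
          (Finset.mem_univ i)
        simpa using h0
      have h2e : (fr i : Rmax) + (E i k + ((-(fr i) : ℝ) : Rmax)) = E i (K i) + g i := by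
        rw [hEf i hE]
      have h2 : E i k ≤ E i (K i) + g i := le_of_eq ((coe_add_cancel _ _).symm.trans h2e)
      calc E i k ≤ E i (K i) + g i := h2
        _ ≤ E i (K i) + y (K i) := add_le_add_right h1 _
        _ ≤ mulVecMP E y i :=
            Finset.le_sup (f := fun k' => E i k' + y k') (Finset.mem_univ (K i))
  have hker := hz (delta k ⊔ y) y (by rw [mulVec_sup]; exact sup_eq_right.mpr hEd)
  have hge : (c : Rmax) ≤ dotMP y z := by
    rw [← hker]
    calc (c : Rmax) = z k := hc
      _ = dotMP (delta k) z := (dot_delta_left k z).symm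
      _ ≤ dotMP (delta k ⊔ y) z := dot_mono_left le_sup_left z
  have hbot : (⊥ : Rmax) < (c : Rmax) := WithBot.bot_lt_coe c
  have hfin : dotMP y z < (c : Rmax) := by
    show (Finset.univ.sup fun k' => y k' + z k') < (c : Rmax)
    refine (Finset.sup_lt_iff hbot).mpr fun k' _ => ?_
    have hyk : y k' = Finset.univ.sup fun i => if K i = k' then g i else ⊥ := by rw [hy2]
    rw [hyk, sup_add_distrib']
    refine (Finset.sup_lt_iff hbot).mpr fun i _ => ?_
    by_cases hKi : K i = k'
    · rw [if_pos hKi]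
      by_cases hE : E i k = ⊥
      · have hgi : g i = ⊥ := by
          simp only [hg]
          rw [hE, WithBot.bot_add]
        rw [hgi, WithBot.bot_add]
        exact hbot
      · obtain ⟨e, he⟩ := WithBot.ne_bot_iff_exists.mp hE
        have h5 := hlt2 i hE
        rw [hKi, ← he] at h5
        have hgi : g i = (e : Rmax) + ((-(fr i) : ℝ) : Rmax) := by
          simp only [hg]
          rw [← he]
        rw [hgi]
        exact key_lt2 h5
    · rw [if_neg hKi, WithBot.bot_add]
      exact hbot
  exact absurd (hge.trans_lt hfin) (lt_irrefl _)

end MPDual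

end AuxProofs

open MPDual in
/-- For any matrix `E ∈ ℝ_max^{p×n}`:
`(Im E)^⊥ = ker Eᵗ` and `(ker E)^⊤ = Im Eᵗ`. -/
theorem orthogonal_of_image_and_kernel
    {p n : ℕ} (E : Matrix (Fin p) (Fin n) Rmax) :
    orthS (imM E) = kerM E.transpose ∧ orthC (kerM E) = imM E.transpose := by
  constructor
  · ext w
    simp only [orthS, kerM, imM, Set.mem_setOf_eq]
    constructor
    · intro h
      funext k
      have h1 := h (mulVecMP E (delta k)) ⟨delta k, rfl⟩
      rw [dot_mulVec, dot_mulVec, dot_delta_right, dot_delta_right] at h1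
      exact h1
    · rintro h z' ⟨w', rfl⟩
      rw [dot_mulVec, dot_mulVec, h]
  · ext z
    simp only [orthC, kerM, imM, Set.mem_setOf_eq]
    constructor
    · intro hz
      exact main_surj E z fun x y hxy => hz (x, y) hxy
    · rintro ⟨u, rfl⟩ q hq
      rw [dot_mulVec, dot_mulVec, Matrix.transpose_transpose, hq]
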